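/- Let g^{-1} = 1 + ∑_{|γ|≥1} a_γ Z_γ be the inverse of g = 1 + ∑ b_α Z_α with b_α > 0, and let X = (X_1,…,X_n) be a tuple of bounded operators on a Hilbert space H such that ∑_{p=1}^∞ ∑_{|α|=p} |a_α| X_α X_α* ≤ c·I for some c ∈ (0,1). Then Δ(X) := I + ∑_{p=1}^∞ ∑_{|α|=p} a_α X_α X_α* is a positive operator and ∑_{β∈F_n^+} b_β X_β Δ(X) X_β* = I, with convergence in the weak operator topology. -/

import Mathlib

open scoped ENNReal Topology

noncomputable section

/-- Words over the alphabet `Fin n`: elements of the free monoid `F_n^+`. -/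
abbrev Word (n : ℕ) := List (Fin n)

/-- The operator `X_α = X_{i₁} ⋯ X_{i_k}` for a word `α = g_{i₁}⋯g_{i_k}` (`X_{g₀} = I`). -/
def opWord {n : ℕ} {H : Type*} [NormedAddCommGroup H] [InnerProductSpace ℂ H]
    (X : Fin n → (H →L[ℂ] H)) (α : Word n) : H →L[ℂ] H := (α.map X).prod

namespace Stmt6Aux

/-! ### Finsets of words -/

def wlen (n p : ℕ) : Finset (Word n) :=
  (Finset.univ : Finset (Fin p → Fin n)).image List.ofFn

lemma mem_wlen {n p : ℕ} {α : Word n} : α ∈ wlen n p ↔ α.length = p := by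
  constructor
  · rintro h
    simp only [wlen, Finset.mem_image] at h
    obtain ⟨f, -, rfl⟩ := h
    simp
  · intro h
    subst h
    simp only [wlen, Finset.mem_image]
    exact ⟨fun i => α.get i, Finset.mem_univ _, (List.ofFn_get α)⟩

lemma sum_wlen {n p : ℕ} {M : Type*} [AddCommMonoid M] (g : Word n → M) :
    ∑ α ∈ wlen n p, g α = ∑ f : Fin p → Fin n, g (List.ofFn f) := by
  rw [wlen]
  exact Finset.sum_image (fun x _ y _ h => List.ofFn_injective h)

def wne (n N : ℕ) : Finset (Word n) := (Finset.Icc 1 N).biUnion (wlen n)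

lemma mem_wne {n N : ℕ} {α : Word n} : α ∈ wne n N ↔ 1 ≤ α.length ∧ α.length ≤ N := by
  simp only [wne, Finset.mem_biUnion, Finset.mem_Icc, mem_wlen]
  constructor
  · rintro ⟨p, ⟨h1, h2⟩, rfl⟩; exact ⟨h1, h2⟩
  · rintro ⟨h1, h2⟩; exact ⟨α.length, ⟨h1, h2⟩, rfl⟩

lemma nil_not_mem_wne {n N : ℕ} : ([] : Word n) ∉ wne n N := by simp [mem_wne]

lemma sum_wne {n N : ℕ} {M : Type*} [AddCommMonoid M] (g : Word n → M) :
    ∑ α ∈ wne n N, g α = ∑ p ∈ Finset.Icc 1 N, ∑ f : Fin p → Fin n, g (List.ofFn f) := by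
  rw [wne, Finset.sum_biUnion]
  · exact Finset.sum_congr rfl fun p _ => sum_wlen g
  · intro p _ q _ hpq
    refine Finset.disjoint_left.mpr fun s hs hs' => hpq ?_
    rw [← mem_wlen.mp hs, ← mem_wlen.mp hs']

def wle (n N : ℕ) : Finset (Word n) := insert [] (wne n N)

lemma mem_wle {n N : ℕ} {α : Word n} : α ∈ wle n N ↔ α.length ≤ N := by
  simp only [wle, Finset.mem_insert, mem_wne]
  constructor
  · rintro (rfl | ⟨-, h⟩)
    · simp
    · exact h
  · intro h
    rcases Nat.eq_zero_or_pos α.length with h0 | h0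
    · left; exact List.length_eq_zero_iff.mp h0
    · right; exact ⟨h0, h⟩

lemma sum_wle {n N : ℕ} {M : Type*} [AddCommMonoid M] (g : Word n → M) :
    ∑ α ∈ wle n N, g α = g [] + ∑ p ∈ Finset.Icc 1 N, ∑ f : Fin p → Fin n, g (List.ofFn f) := by
  rw [wle, Finset.sum_insert nil_not_mem_wne, sum_wne]

lemma wle_mono {n : ℕ} : Monotone (wle n) := by
  intro N M h α hα
  rw [mem_wle] at *
  exact hα.trans h

lemma mem_wle_self {n : ℕ} (α : Word n) : α ∈ wle n α.length := mem_wle.mpr le_rfl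

lemma tendsto_wle {n : ℕ} : Filter.Tendsto (wle n) Filter.atTop Filter.atTop :=
  Filter.tendsto_atTop_finset_of_monotone wle_mono fun α => ⟨α.length, mem_wle_self α⟩

lemma sum_range_succ_eq_sum_wle {n N : ℕ} {M : Type*} [AddCommMonoid M] (g : Word n → M) :
    ∑ p ∈ Finset.range (N + 1), ∑ f : Fin p → Fin n, g (List.ofFn f) =
      ∑ α ∈ wle n N, g α := by
  have hr : Finset.range (N + 1) = insert 0 (Finset.Icc 1 N) := by
    ext p; simp only [Finset.mem_range, Finset.mem_insert, Finset.mem_Icc]; omega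
  rw [hr, Finset.sum_insert (by simp), sum_wle]
  congr 1
  rw [Fintype.sum_unique]
  simp

/-! ### The convolution identity -/

def conv {n : ℕ} (a b : Word n → ℝ) (γ : Word n) : ℝ :=
  ∑ k ∈ Finset.range (γ.length + 1), a (γ.take k) * b (γ.drop k)

lemma conv_nil {n : ℕ} (a b : Word n → ℝ) : conv a b [] = a [] * b [] := by
  simp [conv]

lemma conv_comm_of_inv {n : ℕ} (a b : Word n → ℝ) (ha0 : a [] = 1) (hb0 : b [] = 1)
    (hab : ∀ γ : Word n, γ ≠ [] → conv a b γ = 0) :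
    ∀ γ : Word n, γ ≠ [] → conv b a γ = 0 := by
  have key : ∀ L : ℕ, ∀ γ : Word n, γ.length = L → γ ≠ [] → conv b a γ = 0 := by
    intro L
    induction L using Nat.strong_induction_on with
    | _ L ih =>
      intro γ hlen hne
      have hL1 : 1 ≤ L := by
        rcases γ with _ | ⟨i, γ⟩
        · exact absurd rfl hne
        · simp at hlen; omega
      have h1 : γ.take L = γ := by rw [← hlen]; exact List.take_length
      have h2 : γ.drop L = [] := by rw [← hlen]; exact List.drop_length
      -- The double sum A, computed two ways.
      have A1 : ∑ j ∈ Finset.range (L + 1), conv b a (γ.take j) * b (γ.drop j)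
          = b γ + conv b a γ := by
        rw [Finset.sum_range_succ, h1, h2, hb0, mul_one]
        obtain ⟨L', rfl⟩ : ∃ L', L = L' + 1 := ⟨L - 1, by omega⟩
        rw [Finset.sum_range_succ']
        have hz : conv b a (γ.take 0) * b (γ.drop 0) = b γ := by
          simp [conv_nil, hb0, ha0]
        have hrest : ∀ j ∈ Finset.range L', conv b a (γ.take (j + 1)) * b (γ.drop (j + 1)) = 0 := by
          intro j hj
          rw [Finset.mem_range] at hj
          have hz' : conv b a (γ.take (j + 1)) = 0 := by
            refine ih (j + 1) (by omega) _ ?_ ?_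
            · rw [List.length_take, hlen]; omega
            · intro hnil
              have := congrArg List.length hnil
              rw [List.length_take, hlen] at this
              simp at this
          rw [hz', zero_mul]
        rw [Finset.sum_eq_zero hrest, hz, zero_add, add_comm]
      have A2 : ∑ j ∈ Finset.range (L + 1), conv b a (γ.take j) * b (γ.drop j) = b γ := by
        have expand : ∀ j ∈ Finset.range (L + 1),
            conv b a (γ.take j) * b (γ.drop j) =
              ∑ i ∈ Finset.range (j + 1),
                b (γ.take i) * (a ((γ.drop i).take (j - i)) * b (γ.drop j)) := by
          intro j hj
          rw [Finset.mem_range] at hj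
          have hlt : (γ.take j).length = j := by
            rw [List.length_take, hlen]; omega
          rw [conv, hlt, Finset.sum_mul]
          refine Finset.sum_congr rfl fun i hi => ?_
          rw [Finset.mem_range] at hi
          rw [List.take_take, min_eq_left (by omega), List.drop_take, mul_assoc]
        rw [Finset.sum_congr rfl expand]
        -- swap the order of summation
        rw [Finset.sum_comm' (s := Finset.range (L+1)) (t := fun j => Finset.range (j+1))
          (t' := Finset.range (L+1)) (s' := fun i => Finset.Icc i L)
          (by intro j i; simp only [Finset.mem_range, Finset.mem_Icc]; omega)]
        -- now inner sum over j ∈ Icc i L is b (take i) * conv a b (drop i)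
        have inner : ∀ i ∈ Finset.range (L + 1),
            ∑ j ∈ Finset.Icc i L, b (γ.take i) * (a ((γ.drop i).take (j - i)) * b (γ.drop j))
              = b (γ.take i) * conv a b (γ.drop i) := by
          intro i hi
          rw [Finset.mem_range] at hi
          rw [← Finset.mul_sum]
          congr 1
          rw [conv]
          have hld : (γ.drop i).length = L - i := by rw [List.length_drop, hlen]
          rw [hld]
          rw [show Finset.Icc i L = Finset.map ⟨fun m => i + m, fun x y h => by dsimp at h; omega⟩
              (Finset.range (L - i + 1)) by
            ext j
            simp only [Finset.mem_Icc, Finset.mem_map, Finset.mem_range,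
              Function.Embedding.coeFn_mk]
            constructor
            · intro ⟨hij, hjL⟩; exact ⟨j - i, by omega, by show i + (j - i) = j; omega⟩
            · rintro ⟨m, hm, rfl⟩; show i ≤ i + m ∧ i + m ≤ L; omega]
          rw [Finset.sum_map]
          refine Finset.sum_congr rfl fun m hm => ?_
          show a ((γ.drop i).take (i + m - i)) * b (γ.drop (i + m)) = _
          congr 2
          · congr 1; omega
          · rw [List.drop_drop, Nat.add_comm]
        rw [Finset.sum_congr rfl inner]
        -- conv a b (γ.drop i) = 0 unless i = L
        rw [Finset.sum_range_succ, h1, h2, conv_nil, ha0, hb0, mul_one, mul_one]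
        have hzero : ∀ i ∈ Finset.range L, b (γ.take i) * conv a b (γ.drop i) = 0 := by
          intro i hi
          rw [Finset.mem_range] at hi
          have : conv a b (γ.drop i) = 0 := by
            refine hab _ fun hnil => ?_
            have := congrArg List.length hnil
            rw [List.length_drop, hlen] at this
            simp at this; omega
          rw [this, mul_zero]
        rw [Finset.sum_eq_zero hzero, zero_add]
      have := A1.symm.trans A2
      linarith
  intro γ hne
  exact key γ.length γ rfl hne

/-! ### Operator lemmas -/

variable {n : ℕ} {H : Type*} [NormedAddCommGroup H] [InnerProductSpace ℂ H] [CompleteSpace H]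

/-- `X_α*`. -/
def Tw (X : Fin n → H →L[ℂ] H) (α : Word n) : H →L[ℂ] H :=
  ContinuousLinearMap.adjoint (opWord X α)

lemma Tw_nil (X : Fin n → H →L[ℂ] H) (x : H) : Tw X [] x = x := by
  have h1 : opWord X ([] : Word n) = 1 := rfl
  rw [Tw, h1, ContinuousLinearMap.one_def, ContinuousLinearMap.adjoint_id]
  rfl

lemma opWord_append (X : Fin n → H →L[ℂ] H) (β α : Word n) :
    opWord X (β ++ α) = (opWord X β).comp (opWord X α) := by
  rw [opWord, opWord, opWord, List.map_append, List.prod_append]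
  rfl

lemma Tw_append (X : Fin n → H →L[ℂ] H) (β α : Word n) (x : H) :
    Tw X (β ++ α) x = Tw X α (Tw X β x) := by
  rw [Tw, opWord_append, ContinuousLinearMap.adjoint_comp]
  rfl

/-! ### Summability from `hcI` -/

section Analytic

variable (X : Fin n → H →L[ℂ] H) (a b : Word n → ℝ) (c : ℝ)

lemma sum_le_of_wle_le {f : Word n → ℝ} {C : ℝ} (hf : ∀ α, 0 ≤ f α)
    (h : ∀ N, ∑ α ∈ wle n N, f α ≤ C) (u : Finset (Word n)) : ∑ α ∈ u, f α ≤ C := by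
  refine le_trans (Finset.sum_le_sum_of_subset_of_nonneg (fun α hα => ?_)
    (fun α _ _ => hf α)) (h (u.sup List.length))
  exact mem_wle.mpr (Finset.le_sup hα)

variable (hcI : ∀ (N : ℕ) (x : H),
      (∑ p ∈ Finset.Icc 1 N, ∑ f : Fin p → Fin n,
        |a (List.ofFn f)| *
          ‖ContinuousLinearMap.adjoint (opWord X (List.ofFn f)) x‖ ^ 2) ≤ c * ‖x‖ ^ 2)

include hcI

lemma sum_wne_aq_le (N : ℕ) (x : H) :
    ∑ α ∈ wne n N, |a α| * ‖Tw X α x‖ ^ 2 ≤ c * ‖x‖ ^ 2 := by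
  rw [sum_wne]
  exact hcI N x

lemma sum_wle_aq_le (ha0 : a [] = 1) (N : ℕ) (x : H) :
    ∑ α ∈ wle n N, |a α| * ‖Tw X α x‖ ^ 2 ≤ (1 + c) * ‖x‖ ^ 2 := by
  rw [wle, Finset.sum_insert nil_not_mem_wne]
  have h0 : |a []| * ‖Tw X ([] : Word n) x‖ ^ 2 = ‖x‖ ^ 2 := by
    rw [ha0, Tw_nil]; simp
  have := sum_wne_aq_le X a c hcI N x
  rw [h0]; nlinarith [norm_nonneg x]

lemma summable_aq (ha0 : a [] = 1) (x : H) :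
    Summable (fun α : Word n => |a α| * ‖Tw X α x‖ ^ 2) :=
  summable_of_sum_le (fun α => by positivity)
    (sum_le_of_wle_le (fun α => by positivity) (fun N => sum_wle_aq_le X a c hcI ha0 N x))

lemma tsum_aq_ne_le (ha0 : a [] = 1) (x : H) :
    ∑' α : Word n, (if α = [] then 0 else |a α| * ‖Tw X α x‖ ^ 2) ≤ c * ‖x‖ ^ 2 := by
  have hs : Summable (fun α : Word n => if α = [] then 0 else |a α| * ‖Tw X α x‖ ^ 2) := by
    refine Summable.of_nonneg_of_le (fun α => ?_) (fun α => ?_)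
      (summable_aq X a c hcI ha0 x)
    · split <;> positivity
    · split
      · positivity
      · exact le_rfl
  refine Summable.tsum_le_of_sum_le hs (sum_le_of_wle_le (fun α => ?_) (fun N => ?_))
  · split <;> positivity
  · rw [wle, Finset.sum_insert nil_not_mem_wne, if_pos rfl, zero_add]
    calc ∑ α ∈ wne n N, (if α = [] then 0 else |a α| * ‖Tw X α x‖ ^ 2)
        = ∑ α ∈ wne n N, |a α| * ‖Tw X α x‖ ^ 2 := by
          refine Finset.sum_congr rfl fun α hα => ?_
          rw [if_neg (fun h => nil_not_mem_wne (h ▸ hα))]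
      _ ≤ c * ‖x‖ ^ 2 := sum_wne_aq_le X a c hcI N x

end Analytic

/-! ### The key boundedness lemma -/

def Vfin (X : Fin n → H →L[ℂ] H) (b : Word n → ℝ) (M : ℕ) (x : H) : ℝ :=
  ∑ β ∈ wle n M, b β * ‖Tw X β x‖ ^ 2

lemma Vfin_nonneg (X : Fin n → H →L[ℂ] H) {b : Word n → ℝ} (hbpos : ∀ α, 0 < b α)
    (M : ℕ) (x : H) : 0 ≤ Vfin X b M x :=
  Finset.sum_nonneg fun β _ => mul_nonneg (hbpos β).le (by positivity)

section VfinSec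

variable (X : Fin n → H →L[ℂ] H) (a b : Word n → ℝ) (c : ℝ)

lemma Vfin_eq (hb0 : b [] = 1)
    (hinv : ∀ γ : Word n, γ ≠ [] →
      b γ + ∑ k ∈ Finset.Icc 1 γ.length, a (γ.take k) * b (γ.drop k) = 0)
    (M : ℕ) (x : H) :
    Vfin X b M x = ‖x‖ ^ 2 -
      ∑ γ ∈ wne n M, a γ * Vfin X b (M - γ.length) (Tw X γ x) := by
  have hb' : ∀ β ∈ wne n M, b β * ‖Tw X β x‖ ^ 2 =
      -∑ k ∈ Finset.Icc 1 β.length, a (β.take k) * (b (β.drop k) * ‖Tw X β x‖ ^ 2) := by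
    intro β hβ
    have hne : β ≠ [] := fun h => nil_not_mem_wne (h ▸ hβ)
    have h1 := hinv β hne
    have hbβ : b β = -∑ k ∈ Finset.Icc 1 β.length, a (β.take k) * b (β.drop k) := by
      linarith
    rw [hbβ, neg_mul, Finset.sum_mul]
    exact congrArg Neg.neg (Finset.sum_congr rfl fun k _ => mul_assoc _ _ _)
  have hT : (∑ β ∈ wne n M, ∑ k ∈ Finset.Icc 1 β.length,
        a (β.take k) * (b (β.drop k) * ‖Tw X β x‖ ^ 2)) =
      ∑ γ ∈ wne n M, ∑ α ∈ wle n (M - γ.length),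
        a γ * (b α * ‖Tw X (γ ++ α) x‖ ^ 2) := by
    rw [Finset.sum_sigma' (wne n M) (fun β => Finset.Icc 1 β.length)
        (fun β k => a (β.take k) * (b (β.drop k) * ‖Tw X β x‖ ^ 2)),
      Finset.sum_sigma' (wne n M) (fun γ => wle n (M - γ.length))
        (fun γ α => a γ * (b α * ‖Tw X (γ ++ α) x‖ ^ 2))]
    refine Finset.sum_nbij' (fun p => ⟨p.1.take p.2, p.1.drop p.2⟩)
      (fun q => ⟨q.1 ++ q.2, q.1.length⟩) ?_ ?_ ?_ ?_ ?_
    · rintro ⟨β, k⟩ hp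
      simp only [Finset.mem_sigma, mem_wne, mem_wle, Finset.mem_Icc, List.length_take,
        List.length_drop] at hp ⊢
      omega
    · rintro ⟨γ, α⟩ hq
      simp only [Finset.mem_sigma, mem_wne, mem_wle, Finset.mem_Icc,
        List.length_append] at hq ⊢
      omega
    · rintro ⟨β, k⟩ hp
      simp only [Finset.mem_sigma, mem_wne, Finset.mem_Icc] at hp
      refine Sigma.ext ?_ (heq_of_eq ?_)
      · exact List.take_append_drop k β
      · simp only []
        rw [List.length_take]
        omega
    · rintro ⟨γ, α⟩ hq
      refine Sigma.ext ?_ (heq_of_eq ?_)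
      · exact List.take_left
      · exact List.drop_left
    · rintro ⟨β, k⟩ hp
      simp only []
      rw [List.take_append_drop k β]
  have hinner : ∀ γ ∈ wne n M,
      ∑ α ∈ wle n (M - γ.length), a γ * (b α * ‖Tw X (γ ++ α) x‖ ^ 2)
        = a γ * Vfin X b (M - γ.length) (Tw X γ x) := by
    intro γ _
    rw [← Finset.mul_sum]
    congr 1
    rw [Vfin]
    exact Finset.sum_congr rfl fun α _ => by rw [Tw_append]
  have h0 : b [] * ‖Tw X ([] : Word n) x‖ ^ 2 = ‖x‖ ^ 2 := by
    rw [hb0, Tw_nil, one_mul]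
  rw [Vfin, wle, Finset.sum_insert nil_not_mem_wne, h0,
    Finset.sum_congr rfl hb', Finset.sum_neg_distrib, hT,
    Finset.sum_congr rfl hinner, sub_eq_add_neg]

lemma Vfin_le
    (hcI : ∀ (N : ℕ) (x : H),
      (∑ p ∈ Finset.Icc 1 N, ∑ f : Fin p → Fin n,
        |a (List.ofFn f)| *
          ‖ContinuousLinearMap.adjoint (opWord X (List.ofFn f)) x‖ ^ 2) ≤ c * ‖x‖ ^ 2)
    (hb0 : b [] = 1) (hbpos : ∀ α, 0 < b α) (hc1 : c < 1)
    (hinv : ∀ γ : Word n, γ ≠ [] →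
      b γ + ∑ k ∈ Finset.Icc 1 γ.length, a (γ.take k) * b (γ.drop k) = 0) :
    ∀ (M : ℕ) (x : H), Vfin X b M x ≤ ‖x‖ ^ 2 / (1 - c) := by
  have h1c : (0:ℝ) < 1 - c := by linarith
  intro M
  induction M using Nat.strong_induction_on with
  | _ M ih =>
    intro x
    rw [Vfin_eq X a b hb0 hinv M x]
    have hstep : ∀ γ ∈ wne n M,
        -(a γ * Vfin X b (M - γ.length) (Tw X γ x)) ≤
          |a γ| * ‖Tw X γ x‖ ^ 2 / (1 - c) := by
      intro γ hγ
      obtain ⟨hγ1, hγ2⟩ := mem_wne.mp hγ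
      have hV0 : 0 ≤ Vfin X b (M - γ.length) (Tw X γ x) := Vfin_nonneg X hbpos _ _
      have hVle : Vfin X b (M - γ.length) (Tw X γ x) ≤ ‖Tw X γ x‖ ^ 2 / (1 - c) :=
        ih (M - γ.length) (by omega) _
      calc -(a γ * Vfin X b (M - γ.length) (Tw X γ x))
          = (-(a γ)) * Vfin X b (M - γ.length) (Tw X γ x) := by ring
        _ ≤ |a γ| * Vfin X b (M - γ.length) (Tw X γ x) :=
            mul_le_mul_of_nonneg_right (neg_le_abs _) hV0
        _ ≤ |a γ| * (‖Tw X γ x‖ ^ 2 / (1 - c)) :=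
            mul_le_mul_of_nonneg_left hVle (abs_nonneg _)
        _ = |a γ| * ‖Tw X γ x‖ ^ 2 / (1 - c) := by ring
    have hsum : -∑ γ ∈ wne n M, a γ * Vfin X b (M - γ.length) (Tw X γ x) ≤
        (∑ γ ∈ wne n M, |a γ| * ‖Tw X γ x‖ ^ 2) / (1 - c) := by
      rw [← Finset.sum_neg_distrib, Finset.sum_div]
      exact Finset.sum_le_sum hstep
    have hc' := sum_wne_aq_le X a c hcI M x
    have hfinal : ‖x‖ ^ 2 + c * ‖x‖ ^ 2 / (1 - c) = ‖x‖ ^ 2 / (1 - c) := by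
      field_simp
      ring
    have h2 : (∑ γ ∈ wne n M, |a γ| * ‖Tw X γ x‖ ^ 2) / (1 - c) ≤
        c * ‖x‖ ^ 2 / (1 - c) := by
      gcongr
    linarith

end VfinSec

lemma summable_bq (X : Fin n → H →L[ℂ] H) (a b : Word n → ℝ) (c : ℝ)
    (hcI : ∀ (N : ℕ) (x : H),
      (∑ p ∈ Finset.Icc 1 N, ∑ f : Fin p → Fin n,
        |a (List.ofFn f)| *
          ‖ContinuousLinearMap.adjoint (opWord X (List.ofFn f)) x‖ ^ 2) ≤ c * ‖x‖ ^ 2)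
    (hb0 : b [] = 1) (hbpos : ∀ α, 0 < b α) (hc1 : c < 1)
    (hinv : ∀ γ : Word n, γ ≠ [] →
      b γ + ∑ k ∈ Finset.Icc 1 γ.length, a (γ.take k) * b (γ.drop k) = 0)
    (x : H) : Summable (fun β : Word n => b β * ‖Tw X β x‖ ^ 2) :=
  summable_of_sum_le (fun β => mul_nonneg (hbpos β).le (by positivity))
    (sum_le_of_wle_le (fun β => mul_nonneg (hbpos β).le (by positivity))
      (fun N => Vfin_le X a b c hcI hb0 hbpos hc1 hinv N x))

lemma conv_ab_eq_zero {a b : Word n → ℝ} (ha0 : a [] = 1)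
    (hinv : ∀ γ : Word n, γ ≠ [] →
      b γ + ∑ k ∈ Finset.Icc 1 γ.length, a (γ.take k) * b (γ.drop k) = 0) :
    ∀ γ : Word n, γ ≠ [] → conv a b γ = 0 := by
  intro γ hγ
  have h1 := hinv γ hγ
  rw [conv]
  have hr : Finset.range (γ.length + 1) = insert 0 (Finset.Icc 1 γ.length) := by
    ext p; simp only [Finset.mem_range, Finset.mem_insert, Finset.mem_Icc]; omega
  rw [hr, Finset.sum_insert (by simp)]
  simp only [List.take_zero, List.drop_zero]
  rw [ha0, one_mul]
  linarith


/-! ### The sesquilinear form `B(x,y) = ⟨x, Δ y⟩` -/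

section Delta

variable (X : Fin n → H →L[ℂ] H) (a b : Word n → ℝ) (c : ℝ)

/-- The summand family for `Δ`. -/
def Gf (x y : H) : Word n → ℂ :=
  fun α => (a α : ℂ) * (inner ℂ (Tw X α x) (Tw X α y) : ℂ)

lemma norm_Gf_le (x y : H) (α : Word n) :
    ‖Gf X a x y α‖ ≤ |a α| * ‖Tw X α x‖ ^ 2 + |a α| * ‖Tw X α y‖ ^ 2 := by
  rw [Gf, norm_mul]
  have h1 : ‖((a α : ℝ) : ℂ)‖ = |a α| := by
    rw [Complex.norm_real, Real.norm_eq_abs]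
  rw [h1]
  have h2 : ‖(inner ℂ (Tw X α x) (Tw X α y) : ℂ)‖ ≤ ‖Tw X α x‖ * ‖Tw X α y‖ :=
    norm_inner_le_norm _ _
  nlinarith [abs_nonneg (a α), sq_nonneg (‖Tw X α x‖ - ‖Tw X α y‖),
    norm_nonneg (Tw X α x), norm_nonneg (Tw X α y),
    norm_nonneg (inner ℂ (Tw X α x) (Tw X α y) : ℂ)]

variable (hcI : ∀ (N : ℕ) (x : H),
      (∑ p ∈ Finset.Icc 1 N, ∑ f : Fin p → Fin n,
        |a (List.ofFn f)| *
          ‖ContinuousLinearMap.adjoint (opWord X (List.ofFn f)) x‖ ^ 2) ≤ c * ‖x‖ ^ 2)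
  (ha0 : a [] = 1)

include hcI ha0

lemma summable_Gf (x y : H) : Summable (Gf X a x y) :=
  Summable.of_norm_bounded
    ((summable_aq X a c hcI ha0 x).add (summable_aq X a c hcI ha0 y))
    (norm_Gf_le X a x y)

lemma tsum_aq_le (x : H) :
    ∑' α : Word n, |a α| * ‖Tw X α x‖ ^ 2 ≤ (1 + c) * ‖x‖ ^ 2 :=
  Summable.tsum_le_of_sum_le (summable_aq X a c hcI ha0 x)
    (sum_le_of_wle_le (fun α => by positivity) (fun N => sum_wle_aq_le X a c hcI ha0 N x))

/-- `B(x,y)`. -/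
def Bf (x y : H) : ℂ := ∑' α : Word n, Gf X a x y α

omit hcI ha0

lemma Gf_add_left (x x' y : H) (α : Word n) :
    Gf X a (x + x') y α = Gf X a x y α + Gf X a x' y α := by
  simp only [Gf, map_add, inner_add_left, mul_add]

lemma Gf_add_right (x y y' : H) (α : Word n) :
    Gf X a x (y + y') α = Gf X a x y α + Gf X a x y' α := by
  simp only [Gf, map_add, inner_add_right, mul_add]

lemma Gf_smul_left (t : ℂ) (x y : H) (α : Word n) :
    Gf X a (t • x) y α = (starRingEnd ℂ) t * Gf X a x y α := by
  simp only [Gf, ContinuousLinearMap.map_smul, inner_smul_left]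
  ring

lemma Gf_smul_right (t : ℂ) (x y : H) (α : Word n) :
    Gf X a x (t • y) α = t * Gf X a x y α := by
  simp only [Gf, ContinuousLinearMap.map_smul, inner_smul_right]
  ring

include hcI ha0

lemma Bf_add_left (x x' y : H) :
    Bf X a (x + x') y = Bf X a x y + Bf X a x' y := by
  rw [Bf, Bf, Bf, tsum_congr (Gf_add_left X a x x' y),
    Summable.tsum_add (summable_Gf X a c hcI ha0 x y) (summable_Gf X a c hcI ha0 x' y)]

lemma Bf_add_right (x y y' : H) :
    Bf X a x (y + y') = Bf X a x y + Bf X a x y' := by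
  rw [Bf, Bf, Bf, tsum_congr (Gf_add_right X a x y y'),
    Summable.tsum_add (summable_Gf X a c hcI ha0 x y) (summable_Gf X a c hcI ha0 x y')]

omit hcI ha0

lemma Bf_smul_left (t : ℂ) (x y : H) :
    Bf X a (t • x) y = (starRingEnd ℂ) t * Bf X a x y := by
  rw [Bf, Bf, tsum_congr (Gf_smul_left X a t x y), tsum_mul_left]

lemma Bf_smul_right (t : ℂ) (x y : H) :
    Bf X a x (t • y) = t * Bf X a x y := by
  rw [Bf, Bf, tsum_congr (Gf_smul_right X a t x y), tsum_mul_left]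

lemma Bf_zero_left (y : H) : Bf X a 0 y = 0 := by
  have := Bf_smul_left X a 0 0 y
  rw [zero_smul] at this
  simpa using this

lemma Bf_zero_right (x : H) : Bf X a x 0 = 0 := by
  have := Bf_smul_right X a 0 x 0
  rw [zero_smul] at this
  simpa using this

include hcI ha0

lemma summable_norm_Gf (x y : H) : Summable (fun α => ‖Gf X a x y α‖) :=
  Summable.of_nonneg_of_le (fun α => norm_nonneg _) (norm_Gf_le X a x y)
    ((summable_aq X a c hcI ha0 x).add (summable_aq X a c hcI ha0 y))

lemma Bf_bound_sq (x y : H) :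
    ‖Bf X a x y‖ ≤ (1 + c) * ‖x‖ ^ 2 + (1 + c) * ‖y‖ ^ 2 := by
  have h1 : ‖Bf X a x y‖ ≤ ∑' α : Word n, ‖Gf X a x y α‖ :=
    norm_tsum_le_tsum_norm (summable_norm_Gf X a c hcI ha0 x y)
  have h2 : ∑' α : Word n, ‖Gf X a x y α‖ ≤
      ∑' α : Word n, (|a α| * ‖Tw X α x‖ ^ 2 + |a α| * ‖Tw X α y‖ ^ 2) :=
    Summable.tsum_le_tsum (norm_Gf_le X a x y) (summable_norm_Gf X a c hcI ha0 x y)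
      ((summable_aq X a c hcI ha0 x).add (summable_aq X a c hcI ha0 y))
  have h3 : ∑' α : Word n, (|a α| * ‖Tw X α x‖ ^ 2 + |a α| * ‖Tw X α y‖ ^ 2) =
      (∑' α : Word n, |a α| * ‖Tw X α x‖ ^ 2) + ∑' α : Word n, |a α| * ‖Tw X α y‖ ^ 2 :=
    Summable.tsum_add (summable_aq X a c hcI ha0 x) (summable_aq X a c hcI ha0 y)
  have h4 := tsum_aq_le X a c hcI ha0 x
  have h5 := tsum_aq_le X a c hcI ha0 y
  linarith

lemma Bf_bound (hc0 : 0 < c) (x y : H) :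
    ‖Bf X a x y‖ ≤ 2 * (1 + c) * (‖x‖ * ‖y‖) := by
  rcases eq_or_ne x 0 with rfl | hx
  · rw [Bf_zero_left X a]
    simp only [norm_zero]
    positivity
  rcases eq_or_ne y 0 with rfl | hy
  · rw [Bf_zero_right X a]
    simp only [norm_zero]
    positivity
  have hxn : (0:ℝ) < ‖x‖ := norm_pos_iff.mpr hx
  have hyn : (0:ℝ) < ‖y‖ := norm_pos_iff.mpr hy
  set t : ℝ := Real.sqrt (‖y‖ / ‖x‖) with ht
  have htpos : 0 < t := Real.sqrt_pos.mpr (by positivity)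
  have ht2 : t ^ 2 = ‖y‖ / ‖x‖ := Real.sq_sqrt (by positivity)
  have hkey : Bf X a ((t : ℂ) • x) (((t : ℂ))⁻¹ • y) = Bf X a x y := by
    rw [Bf_smul_left, Bf_smul_right]
    have hconj : (starRingEnd ℂ) ((t : ℝ) : ℂ) = ((t : ℝ) : ℂ) := Complex.conj_ofReal t
    rw [hconj, ← mul_assoc]
    rw [mul_inv_cancel₀ (by exact_mod_cast htpos.ne')]
    rw [one_mul]
  have hb := Bf_bound_sq X a c hcI ha0 ((t : ℂ) • x) (((t : ℂ))⁻¹ • y)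
  rw [hkey] at hb
  have hn1 : ‖(t : ℂ) • x‖ = t * ‖x‖ := by
    rw [norm_smul]
    simp [abs_of_pos htpos]
  have hn2 : ‖((t : ℂ))⁻¹ • y‖ = t⁻¹ * ‖y‖ := by
    rw [norm_smul, norm_inv]
    simp [abs_of_pos htpos]
  rw [hn1, hn2] at hb
  have e1 : (t * ‖x‖) ^ 2 = ‖x‖ * ‖y‖ := by
    rw [mul_pow, ht2]
    field_simp
  have e2 : (t⁻¹ * ‖y‖) ^ 2 = ‖x‖ * ‖y‖ := by
    rw [mul_pow, inv_pow, ht2]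
    field_simp
  rw [e1, e2] at hb
  linarith

end Delta

section DeltaExists

variable (X : Fin n → H →L[ℂ] H) (a : Word n → ℝ) (c : ℝ)

lemma exists_Delta
    (hcI : ∀ (N : ℕ) (x : H),
      (∑ p ∈ Finset.Icc 1 N, ∑ f : Fin p → Fin n,
        |a (List.ofFn f)| *
          ‖ContinuousLinearMap.adjoint (opWord X (List.ofFn f)) x‖ ^ 2) ≤ c * ‖x‖ ^ 2)
    (ha0 : a [] = 1) (hc0 : 0 < c) :
    ∃ Δ : H →L[ℂ] H, ∀ x y : H, (inner ℂ x (Δ y) : ℂ) = Bf X a x y := by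
  have hC : (0:ℝ) ≤ 2 * (1 + c) := by linarith
  -- the functional x ↦ conj (B x y), for fixed y
  have fy : ∀ y : H, ∃ v : H, ∀ x : H, (inner ℂ x v : ℂ) = Bf X a x y := by
    intro y
    set flin : H →ₗ[ℂ] ℂ :=
      { toFun := fun x => (starRingEnd ℂ) (Bf X a x y)
        map_add' := fun x x' => by
          show (starRingEnd ℂ) (Bf X a (x + x') y) =
            (starRingEnd ℂ) (Bf X a x y) + (starRingEnd ℂ) (Bf X a x' y)
          rw [Bf_add_left X a c hcI ha0, map_add]
        map_smul' := fun t x => by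
          show (starRingEnd ℂ) (Bf X a (t • x) y) = _
          rw [Bf_smul_left, map_mul, Complex.conj_conj]
          rfl } with hflin
    set fcont : H →L[ℂ] ℂ := LinearMap.mkContinuous flin (2 * (1 + c) * ‖y‖) (fun x => by
      have : ‖flin x‖ = ‖Bf X a x y‖ := by
        simp only [hflin, LinearMap.coe_mk, AddHom.coe_mk, RCLike.norm_conj]
      rw [this]
      calc ‖Bf X a x y‖ ≤ 2 * (1 + c) * (‖x‖ * ‖y‖) := Bf_bound X a c hcI ha0 hc0 x y
        _ = 2 * (1 + c) * ‖y‖ * ‖x‖ := by ring) with hfcont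
    refine ⟨(InnerProductSpace.toDual ℂ H).symm fcont, fun x => ?_⟩
    have h1 : (inner ℂ ((InnerProductSpace.toDual ℂ H).symm fcont) x : ℂ) = fcont x :=
      InnerProductSpace.toDual_symm_apply
    have h2 : (inner ℂ x ((InnerProductSpace.toDual ℂ H).symm fcont) : ℂ) =
        (starRingEnd ℂ) (fcont x) := by
      rw [← inner_conj_symm, h1]
    rw [h2]
    have : fcont x = (starRingEnd ℂ) (Bf X a x y) := rfl
    rw [this, Complex.conj_conj]
  choose Δ0 hΔ0 using fy
  -- Δ0 is linear and bounded
  have hadd : ∀ y y', Δ0 (y + y') = Δ0 y + Δ0 y' := by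
    intro y y'
    refine ext_inner_left ℂ fun v => ?_
    rw [hΔ0, inner_add_right, hΔ0, hΔ0, Bf_add_right X a c hcI ha0]
  have hsmul : ∀ (t : ℂ) y, Δ0 (t • y) = t • Δ0 y := by
    intro t y
    refine ext_inner_left ℂ fun v => ?_
    rw [hΔ0, inner_smul_right, hΔ0, Bf_smul_right]
  have hbound : ∀ y, ‖Δ0 y‖ ≤ 2 * (1 + c) * ‖y‖ := by
    intro y
    rcases eq_or_ne (Δ0 y) 0 with h0 | h0
    · rw [h0, norm_zero]
      positivity
    have hid : (inner ℂ (Δ0 y) (Δ0 y) : ℂ) = Bf X a (Δ0 y) y := hΔ0 y (Δ0 y)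
    have h2 : ‖(inner ℂ (Δ0 y) (Δ0 y) : ℂ)‖ = ‖Δ0 y‖ ^ 2 := by
      rw [inner_self_eq_norm_sq_to_K]
      simp [norm_pow]
    have h3 := Bf_bound X a c hcI ha0 hc0 (Δ0 y) y
    rw [← hid, h2] at h3
    have hpos : 0 < ‖Δ0 y‖ := norm_pos_iff.mpr h0
    nlinarith
  exact ⟨LinearMap.mkContinuous
    { toFun := Δ0, map_add' := hadd, map_smul' := hsmul } (2 * (1 + c)) hbound,
    fun x y => hΔ0 y x⟩

end DeltaExists

/-! ### Splitting words: `Word × Word ≃ Σ γ, Fin (γ.length + 1)` -/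

def splitEquiv (n : ℕ) : Word n × Word n ≃ Σ γ : Word n, Fin (γ.length + 1) where
  toFun p := ⟨p.1 ++ p.2, ⟨p.1.length, by
    rw [Nat.lt_succ_iff, List.length_append]; exact Nat.le_add_right _ _⟩⟩
  invFun s := (s.1.take s.2, s.1.drop s.2)
  left_inv := by
    rintro ⟨β, α⟩
    simp only [List.take_left, List.drop_left]
  right_inv := by
    rintro ⟨γ, k⟩
    have hk : (k : ℕ) ≤ γ.length := Nat.lt_succ_iff.mp k.isLt
    refine Sigma.ext ?_ ?_
    · exact List.take_append_drop k γ
    · rw [Fin.heq_ext_iff (by dsimp only; rw [List.take_append_drop])]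
      dsimp only
      simp only [List.length_take]
      omega

/-! ### The main `HasSum` computation -/

section MainSum

variable (X : Fin n → H →L[ℂ] H) (a b : Word n → ℝ) (c : ℝ)

lemma hasSum_main
    (hcI : ∀ (N : ℕ) (x : H),
      (∑ p ∈ Finset.Icc 1 N, ∑ f : Fin p → Fin n,
        |a (List.ofFn f)| *
          ‖ContinuousLinearMap.adjoint (opWord X (List.ofFn f)) x‖ ^ 2) ≤ c * ‖x‖ ^ 2)
    (ha0 : a [] = 1) (hb0 : b [] = 1) (hbpos : ∀ α, 0 < b α) (hc0 : 0 < c) (hc1 : c < 1)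
    (hinv : ∀ γ : Word n, γ ≠ [] →
      b γ + ∑ k ∈ Finset.Icc 1 γ.length, a (γ.take k) * b (γ.drop k) = 0)
    (Δ : H →L[ℂ] H) (hΔ : ∀ x y : H, (inner ℂ x (Δ y) : ℂ) = Bf X a x y) (x y : H) :
    HasSum (fun β : Word n => (b β : ℂ) * (inner ℂ (Tw X β x) (Δ (Tw X β y)) : ℂ))
      (inner ℂ x y : ℂ) := by
  have hsb_x := summable_bq X a b c hcI hb0 hbpos hc1 hinv x
  have hsb_y := summable_bq X a b c hcI hb0 hbpos hc1 hinv y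
  -- the doubly-indexed family
  set h : Word n × Word n → ℂ := fun p =>
    ((b p.1 * a p.2 : ℝ) : ℂ) *
      (inner ℂ (Tw X (p.1 ++ p.2) x) (Tw X (p.1 ++ p.2) y) : ℂ) with hh
  set m : Word n × Word n → ℝ := fun p =>
    b p.1 * (|a p.2| * ‖Tw X (p.1 ++ p.2) x‖ ^ 2 + |a p.2| * ‖Tw X (p.1 ++ p.2) y‖ ^ 2)
    with hm
  have hm_nonneg : ∀ p, 0 ≤ m p := fun p => by
    have := (hbpos p.1).le
    positivity
  -- each slice of m is summable with controlled sum
  have hslice : ∀ β : Word n, Summable (fun α => m (β, α)) := by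
    intro β
    have : (fun α => m (β, α)) = fun α =>
        b β * ((|a α| * ‖Tw X α (Tw X β x)‖ ^ 2) + (|a α| * ‖Tw X α (Tw X β y)‖ ^ 2)) := by
      funext α
      rw [hm]
      simp only []
      rw [Tw_append, Tw_append]
    rw [this]
    exact (((summable_aq X a c hcI ha0 (Tw X β x)).add
      (summable_aq X a c hcI ha0 (Tw X β y))).mul_left (b β))
  have hslice_le : ∀ β : Word n, ∑' α, m (β, α) ≤
      (1 + c) * (b β * ‖Tw X β x‖ ^ 2 + b β * ‖Tw X β y‖ ^ 2) := by
    intro β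
    have he : ∀ α : Word n, m (β, α) =
        b β * (|a α| * ‖Tw X α (Tw X β x)‖ ^ 2) + b β * (|a α| * ‖Tw X α (Tw X β y)‖ ^ 2) := by
      intro α
      rw [hm]
      simp only []
      rw [Tw_append, Tw_append]
      ring
    rw [tsum_congr he, Summable.tsum_add ((summable_aq X a c hcI ha0 (Tw X β x)).mul_left _)
      ((summable_aq X a c hcI ha0 (Tw X β y)).mul_left _), tsum_mul_left, tsum_mul_left]
    have h1 := tsum_aq_le X a c hcI ha0 (Tw X β x)
    have h2 := tsum_aq_le X a c hcI ha0 (Tw X β y)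
    have hbb := (hbpos β).le
    nlinarith [mul_le_mul_of_nonneg_left h1 hbb, mul_le_mul_of_nonneg_left h2 hbb]
  have hm_sum : Summable m := by
    rw [summable_prod_of_nonneg hm_nonneg]
    refine ⟨hslice, ?_⟩
    refine Summable.of_nonneg_of_le (fun β => tsum_nonneg fun α => hm_nonneg (β, α))
      hslice_le ?_
    exact ((hsb_x.add hsb_y).mul_left (1 + c))
  have hh_norm : ∀ p, ‖h p‖ ≤ m p := by
    intro p
    rw [hh, hm]
    simp only [norm_mul]
    have h1 : ‖((b p.1 * a p.2 : ℝ) : ℂ)‖ = b p.1 * |a p.2| := by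
      rw [Complex.norm_real, Real.norm_eq_abs, abs_mul, abs_of_pos (hbpos p.1)]
    rw [h1]
    have h2 : ‖(inner ℂ (Tw X (p.1 ++ p.2) x) (Tw X (p.1 ++ p.2) y) : ℂ)‖ ≤
        ‖Tw X (p.1 ++ p.2) x‖ * ‖Tw X (p.1 ++ p.2) y‖ := norm_inner_le_norm _ _
    have hb1 := (hbpos p.1).le
    have ha1 := abs_nonneg (a p.2)
    nlinarith [sq_nonneg (‖Tw X (p.1 ++ p.2) x‖ - ‖Tw X (p.1 ++ p.2) y‖),
      norm_nonneg (Tw X (p.1 ++ p.2) x), norm_nonneg (Tw X (p.1 ++ p.2) y),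
      norm_nonneg (inner ℂ (Tw X (p.1 ++ p.2) x) (Tw X (p.1 ++ p.2) y) : ℂ),
      mul_nonneg hb1 ha1]
  have hh_sum : Summable h := Summable.of_norm_bounded hm_sum hh_norm
  have hh_slice : ∀ β : Word n, Summable (fun α => h (β, α)) := by
    intro β
    refine Summable.of_norm_bounded (hslice β) (fun α => hh_norm (β, α))
  -- identify the fiberwise sums with the K-terms
  have hfiber : ∀ β : Word n, HasSum (fun α => h (β, α))
      ((b β : ℂ) * (inner ℂ (Tw X β x) (Δ (Tw X β y)) : ℂ)) := by
    intro β
    rw [(hh_slice β).hasSum_iff]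
    rw [hΔ, Bf]
    have he : ∀ α : Word n, h (β, α) = (b β : ℂ) * Gf X a (Tw X β x) (Tw X β y) α := by
      intro α
      rw [hh, Gf]
      simp only []
      rw [Tw_append, Tw_append]
      push_cast
      ring
    rw [tsum_congr he, tsum_mul_left]
  -- so our sum has value ∑' p, h p
  have hKsum : HasSum (fun β : Word n => (b β : ℂ) * (inner ℂ (Tw X β x) (Δ (Tw X β y)) : ℂ))
      (∑' p : Word n × Word n, h p) := by
    exact HasSum.prod_fiberwise hh_sum.hasSum hfiber
  -- compute ∑' p, h p = ⟨x, y⟩ by regrouping along splitEquiv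
  have hregroup : ∑' p : Word n × Word n, h p = (inner ℂ x y : ℂ) := by
    have h1 : ∑' s : Σ γ : Word n, Fin (γ.length + 1), h ((splitEquiv n).symm s) = ∑' p, h p :=
      Equiv.tsum_eq (splitEquiv n).symm h
    rw [← h1]
    have hs : Summable (fun s : Σ γ : Word n, Fin (γ.length + 1) => h ((splitEquiv n).symm s)) :=
      ((splitEquiv n).symm.summable_iff (f := h)).mpr hh_sum
    rw [hs.tsum_sigma]
    have hfib : ∀ γ : Word n, ∑' k : Fin (γ.length + 1), h ((splitEquiv n).symm ⟨γ, k⟩) =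
        ((conv b a γ : ℝ) : ℂ) * (inner ℂ (Tw X γ x) (Tw X γ y) : ℂ) := by
      intro γ
      rw [tsum_fintype]
      have he2 : ∀ k : Fin (γ.length + 1), h ((splitEquiv n).symm ⟨γ, k⟩) =
          ((b (γ.take k) * a (γ.drop k) : ℝ) : ℂ) * (inner ℂ (Tw X γ x) (Tw X γ y) : ℂ) := by
        intro k
        have : (splitEquiv n).symm ⟨γ, k⟩ = (γ.take k, γ.drop k) := rfl
        rw [this, hh]
        simp only []
        rw [List.take_append_drop]
      rw [Finset.sum_congr rfl (fun k _ => he2 k), ← Finset.sum_mul]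
      congr 1
      rw [conv]
      push_cast
      rw [← Fin.sum_univ_eq_sum_range (fun k => ((b (γ.take k) : ℂ) * (a (γ.drop k) : ℂ)))]
    rw [tsum_congr hfib]
    rw [tsum_eq_single ([] : Word n)]
    · rw [conv_nil, ha0, hb0, one_mul]
      have hx : Tw X ([] : Word n) x = x := Tw_nil X x
      have hy : Tw X ([] : Word n) y = y := Tw_nil X y
      rw [hx, hy]
      norm_num
    · intro γ hγ
      rw [conv_comm_of_inv a b ha0 hb0 ?_ γ hγ]
      · norm_num
      · exact conv_ab_eq_zero ha0 hinv
  rw [← hregroup]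
  exact hKsum

end MainSum

/-! ### Positivity -/

section Positivity

variable (X : Fin n → H →L[ℂ] H) (a : Word n → ℝ) (c : ℝ)

lemma Bf_re_nonneg
    (hcI : ∀ (N : ℕ) (x : H),
      (∑ p ∈ Finset.Icc 1 N, ∑ f : Fin p → Fin n,
        |a (List.ofFn f)| *
          ‖ContinuousLinearMap.adjoint (opWord X (List.ofFn f)) x‖ ^ 2) ≤ c * ‖x‖ ^ 2)
    (ha0 : a [] = 1) (hc1 : c < 1) (x : H) :
    0 ≤ (Bf X a x x).re := by
  have hsum := summable_Gf X a c hcI ha0 x x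
  have hsplit := Summable.tsum_eq_add_tsum_ite hsum ([] : Word n)
  have hG0 : Gf X a x x [] = (inner ℂ x x : ℂ) := by
    rw [Gf, Tw_nil, ha0]
    norm_num
  -- bound the remainder
  set R : ℂ := ∑' α : Word n, if α = [] then 0 else Gf X a x x α with hR
  have hGq : ∀ α : Word n, ‖Gf X a x x α‖ ≤ |a α| * ‖Tw X α x‖ ^ 2 := by
    intro α
    rw [Gf, norm_mul, Complex.norm_real, Real.norm_eq_abs]
    have h2 : ‖(inner ℂ (Tw X α x) (Tw X α x) : ℂ)‖ ≤ ‖Tw X α x‖ * ‖Tw X α x‖ :=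
      norm_inner_le_norm _ _
    have := abs_nonneg (a α)
    nlinarith
  have hnormite : ∀ α : Word n, ‖if α = [] then 0 else Gf X a x x α‖ ≤
      (if α = [] then 0 else |a α| * ‖Tw X α x‖ ^ 2) := by
    intro α
    split
    · simp
    · exact hGq α
  have hsumite : Summable (fun α : Word n => if α = [] then 0 else |a α| * ‖Tw X α x‖ ^ 2) := by
    refine Summable.of_nonneg_of_le (fun α => ?_) (fun α => ?_) (summable_aq X a c hcI ha0 x)
    · split
      · exact le_rfl
      · positivity
    · split
      · positivity
      · exact le_rfl
  have hRnorm : ‖R‖ ≤ c * ‖x‖ ^ 2 := by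
    calc ‖R‖ ≤ ∑' α : Word n, ‖if α = [] then 0 else Gf X a x x α‖ :=
        norm_tsum_le_tsum_norm
          (Summable.of_nonneg_of_le (fun α => norm_nonneg _) hnormite hsumite)
      _ ≤ ∑' α : Word n, (if α = [] then 0 else |a α| * ‖Tw X α x‖ ^ 2) :=
        Summable.tsum_le_tsum hnormite
          (Summable.of_nonneg_of_le (fun α => norm_nonneg _) hnormite hsumite) hsumite
      _ ≤ c * ‖x‖ ^ 2 := tsum_aq_ne_le X a c hcI ha0 x
  have hBx : Bf X a x x = (inner ℂ x x : ℂ) + R := by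
    rw [Bf, hsplit, hG0]
  rw [hBx, Complex.add_re]
  have hxx : (inner ℂ x x : ℂ).re = ‖x‖ ^ 2 := by
    rw [inner_self_eq_norm_sq_to_K]
    norm_cast
  rw [hxx]
  have hre : |R.re| ≤ ‖R‖ := Complex.abs_re_le_norm R
  have h1 : c * ‖x‖ ^ 2 ≤ ‖x‖ ^ 2 := by nlinarith [sq_nonneg ‖x‖, norm_nonneg x]
  have := abs_le.mp hre
  linarith

end Positivity

end Stmt6Aux

/-- let `g⁻¹ = 1 + ∑ a_γ Z_γ` be the inverse of `g = 1 + ∑ b_α Z_α` (with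
`b_α > 0`), and let `X` be a tuple of operators with `∑_{|α|≥1} |a_α| X_α X_α* ≤ c·I` for
some `c ∈ (0,1)` (expressed via the quadratic forms `∑ |a_α| ‖X_α* x‖² ≤ c ‖x‖²`).  Then
`Δ(X) := I + ∑_{|α|≥1} a_α X_α X_α*` exists as a weak-operator-topology limit, it is a
positive operator, and `∑_β b_β X_β Δ(X) X_β* = I` in the weak operator topology. -/
theorem stmt6 {n : ℕ} {H : Type*} [NormedAddCommGroup H] [InnerProductSpace ℂ H]
    [CompleteSpace H]
    (a b : Word n → ℝ) (ha0 : a [] = 1) (hb0 : b [] = 1) (hbpos : ∀ α, 0 < b α)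
    (hinv : ∀ γ : Word n, γ ≠ [] →
      b γ + ∑ k ∈ Finset.Icc 1 γ.length, a (γ.take k) * b (γ.drop k) = 0)
    (X : Fin n → (H →L[ℂ] H)) (c : ℝ) (hc0 : 0 < c) (hc1 : c < 1)
    (hcI : ∀ (N : ℕ) (x : H),
      (∑ p ∈ Finset.Icc 1 N, ∑ f : Fin p → Fin n,
        |a (List.ofFn f)| *
          ‖ContinuousLinearMap.adjoint (opWord X (List.ofFn f)) x‖ ^ 2) ≤ c * ‖x‖ ^ 2) :
    ∃ Δ : H →L[ℂ] H,
      (∀ x y : H, Filter.Tendsto (fun N : ℕ =>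
          (inner ℂ x y : ℂ) + ∑ p ∈ Finset.Icc 1 N, ∑ f : Fin p → Fin n,
            (a (List.ofFn f) : ℂ) *
              (inner ℂ (ContinuousLinearMap.adjoint (opWord X (List.ofFn f)) x)
                (ContinuousLinearMap.adjoint (opWord X (List.ofFn f)) y) : ℂ))
        Filter.atTop (𝓝 (inner ℂ x (Δ y) : ℂ))) ∧
      (∀ x : H, 0 ≤ (inner ℂ x (Δ x) : ℂ).re) ∧
      (∀ x y : H, Filter.Tendsto (fun N : ℕ =>
          ∑ p ∈ Finset.range (N + 1), ∑ f : Fin p → Fin n,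
            (b (List.ofFn f) : ℂ) *
              (inner ℂ (ContinuousLinearMap.adjoint (opWord X (List.ofFn f)) x)
                (Δ (ContinuousLinearMap.adjoint (opWord X (List.ofFn f)) y)) : ℂ))
        Filter.atTop (𝓝 (inner ℂ x y : ℂ))) := by
  classical
  obtain ⟨Δ, hΔ⟩ := Stmt6Aux.exists_Delta X a c hcI ha0 hc0
  refine ⟨Δ, ?_, ?_, ?_⟩
  · -- WOT convergence of the defining series of Δ
    intro x y
    have hsum : HasSum (Stmt6Aux.Gf X a x y) (Stmt6Aux.Bf X a x y) :=
      (Stmt6Aux.summable_Gf X a c hcI ha0 x y).hasSum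
    have htend : Filter.Tendsto
        (fun N : ℕ => ∑ α ∈ Stmt6Aux.wle n N, Stmt6Aux.Gf X a x y α)
        Filter.atTop (𝓝 (Stmt6Aux.Bf X a x y)) := by
      have h' : Filter.Tendsto
          (fun s : Finset (Word n) => ∑ α ∈ s, Stmt6Aux.Gf X a x y α)
          Filter.atTop (𝓝 (Stmt6Aux.Bf X a x y)) := hsum
      exact h'.comp Stmt6Aux.tendsto_wle
    rw [hΔ x y]
    refine Filter.Tendsto.congr (fun N => ?_) htend
    rw [Stmt6Aux.sum_wle (Stmt6Aux.Gf X a x y)]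
    congr 1
    rw [Stmt6Aux.Gf, Stmt6Aux.Tw_nil, Stmt6Aux.Tw_nil, ha0]
    norm_num
  · -- positivity
    intro x
    rw [hΔ x x]
    exact Stmt6Aux.Bf_re_nonneg X a c hcI ha0 hc1 x
  · -- the main identity
    intro x y
    have hK := Stmt6Aux.hasSum_main X a b c hcI ha0 hb0 hbpos hc0 hc1 hinv Δ hΔ x y
    have htend : Filter.Tendsto
        (fun N : ℕ => ∑ β ∈ Stmt6Aux.wle n N,
          (b β : ℂ) * (inner ℂ (Stmt6Aux.Tw X β x) (Δ (Stmt6Aux.Tw X β y)) : ℂ))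
        Filter.atTop (𝓝 (inner ℂ x y : ℂ)) := by
      have h' : Filter.Tendsto
          (fun s : Finset (Word n) => ∑ β ∈ s,
            (b β : ℂ) * (inner ℂ (Stmt6Aux.Tw X β x) (Δ (Stmt6Aux.Tw X β y)) : ℂ))
          Filter.atTop (𝓝 (inner ℂ x y : ℂ)) := hK
      exact h'.comp Stmt6Aux.tendsto_wle
    refine Filter.Tendsto.congr (fun N => ?_) htend
    exact (Stmt6Aux.sum_range_succ_eq_sum_wle
      (fun β => (b β : ℂ) * (inner ℂ (Stmt6Aux.Tw X β x) (Δ (Stmt6Aux.Tw X β y)) : ℂ))).symm
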